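/- Let H be a symmetric positive semidefinite n×n matrix, g ∈ ℝⁿ a nonzero vector, γ > 0, B a symmetric positive definite matrix defining the norm ‖h‖² = ⟨Bh,h⟩, and let x⁺ := x − (H + (‖g‖_*/γ)B)^{-1} g, where ‖g‖_* = ⟨g, B^{-1}g⟩^{1/2}. Then ⟨g, x − x⁺⟩ > 0 and ‖x⁺ − x‖ ≤ γ. -/

import Mathlib

open Matrix

noncomputable def normB {n : ℕ} (B : Matrix (Fin n) (Fin n) ℝ) (h : Fin n → ℝ) : ℝ :=
  Real.sqrt (h ⬝ᵥ B *ᵥ h)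

noncomputable def dualNormB {n : ℕ} (B : Matrix (Fin n) (Fin n) ℝ) (s : Fin n → ℝ) : ℝ :=
  Real.sqrt (s ⬝ᵥ B⁻¹ *ᵥ s)

private lemma symm_dot {n : ℕ} {B : Matrix (Fin n) (Fin n) ℝ} (hB : B.IsHermitian)
    (u v : Fin n → ℝ) : u ⬝ᵥ B *ᵥ v = v ⬝ᵥ B *ᵥ u := by
  have hBt : Bᵀ = B := by
    have := hB
    rwa [Matrix.IsHermitian, Matrix.conjTranspose_eq_transpose_of_trivial] at this
  rw [Matrix.dotProduct_mulVec, ← Matrix.mulVec_transpose, hBt, dotProduct_comm]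

private lemma cs_ineq {n : ℕ} {B : Matrix (Fin n) (Fin n) ℝ} (hB : B.PosSemidef)
    (u v : Fin n → ℝ) :
    (u ⬝ᵥ B *ᵥ v) ^ 2 ≤ (u ⬝ᵥ B *ᵥ u) * (v ⬝ᵥ B *ᵥ v) := by
  have hd : discrim (v ⬝ᵥ B *ᵥ v) (2 * (u ⬝ᵥ B *ᵥ v)) (u ⬝ᵥ B *ᵥ u) ≤ 0 := by
    apply discrim_le_zero
    intro t
    have h0 : 0 ≤ (u + t • v) ⬝ᵥ B *ᵥ (u + t • v) := by
      have := hB.dotProduct_mulVec_nonneg (u + t • v)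
      simpa using this
    have hsym : v ⬝ᵥ B *ᵥ u = u ⬝ᵥ B *ᵥ v := symm_dot hB.isHermitian v u
    have hexp : (u + t • v) ⬝ᵥ B *ᵥ (u + t • v)
        = (v ⬝ᵥ B *ᵥ v) * (t * t) + 2 * (u ⬝ᵥ B *ᵥ v) * t + u ⬝ᵥ B *ᵥ u := by
      simp only [Matrix.mulVec_add, Matrix.mulVec_smul, add_dotProduct,
        smul_dotProduct, dotProduct_add, dotProduct_smul,
        smul_eq_mul, hsym]
      ring
    linarith [hexp ▸ h0]
  rw [discrim] at hd
  nlinarith [hd]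

theorem regularized_newton_step_basic {n : ℕ}
    (H B : Matrix (Fin n) (Fin n) ℝ) (hH : H.PosSemidef) (hB : B.PosDef)
    (x g : Fin n → ℝ) (hg : g ≠ 0) (γ : ℝ) (hγ : 0 < γ)
    (xp : Fin n → ℝ)
    (hxp : xp = x - (H + (dualNormB B g / γ) • B)⁻¹ *ᵥ g) :
    0 < g ⬝ᵥ (x - xp) ∧ normB B (xp - x) ≤ γ := by
  subst hxp
  set r := dualNormB B g with hr
  have hBinv : B⁻¹.PosDef := hB.inv
  have hr2 : 0 < g ⬝ᵥ B⁻¹ *ᵥ g := by simpa using hBinv.dotProduct_mulVec_pos hg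
  have hrpos : 0 < r := Real.sqrt_pos.mpr hr2
  have hrsq : r ^ 2 = g ⬝ᵥ B⁻¹ *ᵥ g := Real.sq_sqrt hr2.le
  set lam := r / γ with hlam
  have hlampos : 0 < lam := div_pos hrpos hγ
  set M := H + lam • B with hMdef
  have hM : M.PosDef := by
    refine Matrix.PosDef.of_dotProduct_mulVec_pos ?_ ?_
    · exact hH.isHermitian.add (by
        have hBt : Bᵀ = B := by
          have := hB.isHermitian
          rwa [Matrix.IsHermitian, Matrix.conjTranspose_eq_transpose_of_trivial] at this
        simp [Matrix.IsHermitian, Matrix.conjTranspose_smul, hBt])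
    · intro y hy
      have h1 : 0 ≤ y ⬝ᵥ H *ᵥ y := by simpa using hH.dotProduct_mulVec_nonneg y
      have h2 : 0 < y ⬝ᵥ B *ᵥ y := by simpa using hB.dotProduct_mulVec_pos hy
      have : y ⬝ᵥ M *ᵥ y = y ⬝ᵥ H *ᵥ y + lam * (y ⬝ᵥ B *ᵥ y) := by
        simp [hMdef, Matrix.add_mulVec, Matrix.smul_mulVec,
          dotProduct_add, dotProduct_smul]
      simp only [star_trivial]
      rw [this]
      positivity
  set h := M⁻¹ *ᵥ g with hh
  have hMdet : IsUnit M.det := (Matrix.isUnit_iff_isUnit_det M).mp hM.isUnit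
  have hMh : M *ᵥ h = g := by
    rw [hh, Matrix.mulVec_mulVec, Matrix.mul_nonsing_inv _ hMdet, Matrix.one_mulVec]
  have hne : h ≠ 0 := by
    intro h0
    apply hg
    rw [← hMh, h0, Matrix.mulVec_zero]
  have hsub : x - (x - h) = h := sub_sub_cancel x h
  have hgh : g ⬝ᵥ h = h ⬝ᵥ M *ᵥ h := by rw [← hMh]; exact dotProduct_comm _ _
  have hghpos : 0 < g ⬝ᵥ h := by
    rw [hgh]; simpa using hM.dotProduct_mulVec_pos hne
  refine ⟨by rwa [hsub], ?_⟩
  -- second part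
  have hnorm : normB B ((x - h) - x) = Real.sqrt (h ⬝ᵥ B *ᵥ h) := by
    have : (x - h) - x = -h := by ring_nf
    rw [this, normB]
    congr 1
    simp [Matrix.mulVec_neg, dotProduct_neg, neg_dotProduct]
  rw [hnorm]
  set a := h ⬝ᵥ B *ᵥ h with ha
  have hanonneg : 0 ≤ a := by simpa using hB.posSemidef.dotProduct_mulVec_nonneg h
  -- B *ᵥ (B⁻¹ *ᵥ g) = g
  have hBdet : IsUnit B.det := (Matrix.isUnit_iff_isUnit_det B).mp hB.isUnit
  set u := B⁻¹ *ᵥ g with hu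
  have hBu : B *ᵥ u = g := by
    rw [hu, Matrix.mulVec_mulVec, Matrix.mul_nonsing_inv _ hBdet, Matrix.one_mulVec]
  have huBh : u ⬝ᵥ B *ᵥ h = g ⬝ᵥ h := by
    rw [symm_dot hB.isHermitian u h, hBu, dotProduct_comm]
  have huBu : u ⬝ᵥ B *ᵥ u = r ^ 2 := by
    rw [hBu, hu, dotProduct_comm, hrsq]
  have hcs : (g ⬝ᵥ h) ^ 2 ≤ r ^ 2 * a := by
    have := cs_ineq hB.posSemidef u h
    rwa [huBh, huBu] at this
  have hlow : lam * a ≤ g ⬝ᵥ h := by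
    have hHh : 0 ≤ h ⬝ᵥ H *ᵥ h := by simpa using hH.dotProduct_mulVec_nonneg h
    have hexp : h ⬝ᵥ M *ᵥ h = h ⬝ᵥ H *ᵥ h + lam * a := by
      simp [hMdef, Matrix.add_mulVec, Matrix.smul_mulVec,
        dotProduct_add, dotProduct_smul, ha]
    rw [hgh, hexp]
    linarith
  have hup : g ⬝ᵥ h ≤ r * Real.sqrt a := by
    have h1 : g ⬝ᵥ h ≤ Real.sqrt (r ^ 2 * a) := by
      exact Real.le_sqrt_of_sq_le hcs
    have h2 : Real.sqrt (r ^ 2 * a) = r * Real.sqrt a := by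
      rw [Real.sqrt_mul (sq_nonneg r), Real.sqrt_sq hrpos.le]
    rwa [h2] at h1
  -- lam * a ≤ r * sqrt a, lam = r / γ
  have key : a ≤ γ * Real.sqrt a := by
    have : (r / γ) * a ≤ r * Real.sqrt a := hlam ▸ (le_trans hlow hup)
    have h3 : r * a ≤ r * (γ * Real.sqrt a) := by
      have := mul_le_mul_of_nonneg_left this hγ.le
      calc r * a = γ * ((r / γ) * a) := by field_simp
        _ ≤ γ * (r * Real.sqrt a) := this
        _ = r * (γ * Real.sqrt a) := by ring
    exact le_of_mul_le_mul_left h3 hrpos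
  have hsa : Real.sqrt a * Real.sqrt a = a := Real.mul_self_sqrt hanonneg
  rcases eq_or_lt_of_le (Real.sqrt_nonneg a) with h0 | h0
  · rw [← h0]; exact hγ.le
  · nlinarith [key, hsa, h0]
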